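/- Suppose Condition (3) holds at every feasible point q ∈ Q, and suppose there exist finite reals b̲_i ≤ b̄_i with [b̲_i, b̄_i] ⊆ [0, b_i] for every vertex i such that, writing B̄ = Π_i [b̲_i, b̄_i]: for every i and every q ∈ B̄ with q_i = b̄_i one has f_i(q) ≤ 0, and for every q ∈ B̄ with q_i = b̲_i one has f_i(q) ≥ 0. Then the system has exactly one equilibrium point in Q; it lies in B̄, and every eigenvalue of the Jacobian Df at this equilibrium has strictly negative real part. (This is the paper's Theorem 3.) -/

import Mathlib

/-- A single-commodity network system: a finite directed acyclic graph on
`Fin N` (no self-loops, at most one direction per pair, connected underlying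
undirected graph), buffer sizes `b i ∈ (0,∞]`, nonnegative arrival rates
`lam i`, a `C¹` policy `g i j : ℝ × ℝ → ℝ` for each edge `(i,j) ∈ E`, and a
`C¹` departure function `gT i : ℝ → ℝ` for each vertex. -/
structure SingleCommoditySystem (N : ℕ) where
  E : Finset (Fin N × Fin N)
  no_self_loops : ∀ e ∈ E, e.1 ≠ e.2
  antisymm : ∀ i u : Fin N, (i, u) ∈ E → (u, i) ∉ E
  acyclic : ∃ rank : Fin N → ℕ, ∀ e ∈ E, rank e.1 < rank e.2
  connected : (SimpleGraph.fromRel fun i u => (i, u) ∈ E).Connected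
  b : Fin N → EReal
  b_pos : ∀ i, 0 < b i
  lam : Fin N → ℝ
  lam_nonneg : ∀ i, 0 ≤ lam i
  g : Fin N → Fin N → ℝ → ℝ → ℝ
  gT : Fin N → ℝ → ℝ
  g_contDiff : ∀ e ∈ E, ContDiff ℝ 1 (fun x : ℝ × ℝ => g e.1 e.2 x.1 x.2)
  gT_contDiff : ∀ i, ContDiff ℝ 1 (gT i)

namespace SingleCommoditySystem

variable {N : ℕ} (S : SingleCommoditySystem N)

/-- The feasible set `Q = Π_i [0, b i]`. -/
def Feasible (q : Fin N → ℝ) : Prop := ∀ i, 0 ≤ q i ∧ (q i : EReal) ≤ S.b i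

/-- The dynamics
`f i (q) = lam i + Σ_{k:(k,i)∈E} g k i (q k) (q i) − Σ_{j:(i,j)∈E} g i j (q i) (q j) − gT i (q i)`. -/
noncomputable def f (q : Fin N → ℝ) (i : Fin N) : ℝ :=
  S.lam i + ∑ k ∈ Finset.univ.filter fun k => (k, i) ∈ S.E, S.g k i (q k) (q i)
    - ∑ j ∈ Finset.univ.filter fun j => (i, j) ∈ S.E, S.g i j (q i) (q j)
    - S.gT i (q i)

/-- Condition (3) at a point `q`: `∂g_{ij}/∂q_i > 0` and `∂g_{ij}/∂q_j < 0`
for every edge `(i,j) ∈ E`, `gT i ' (q i) ≥ 0` for every vertex `i`, and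
`gT i ' (q i) > 0` for at least one vertex `i`. -/
def Cond3 (q : Fin N → ℝ) : Prop :=
  (∀ e ∈ S.E, 0 < deriv (fun x => S.g e.1 e.2 x (q e.2)) (q e.1) ∧
      deriv (fun y => S.g e.1 e.2 (q e.1) y) (q e.2) < 0) ∧
  (∀ i, 0 ≤ deriv (S.gT i) (q i)) ∧ (∃ i, 0 < deriv (S.gT i) (q i))

/-- The Jacobian matrix `Df(q)`, with `(i,u)` entry the partial derivative
`∂f_i/∂q_u` at `q`. -/
noncomputable def jacobian (q : Fin N → ℝ) : Matrix (Fin N) (Fin N) ℝ :=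
  fun i u => deriv (fun x => S.f (Function.update q u x) i) (q u)

end SingleCommoditySystem

namespace SCSAux

open SingleCommoditySystem Finset

variable {N : ℕ} (S : SingleCommoditySystem N)

/-- the feasible interval for coordinate `i` -/
def I (i : Fin N) : Set ℝ := {x | 0 ≤ x ∧ (x : EReal) ≤ S.b i}

lemma feasible_iff {q : Fin N → ℝ} : S.Feasible q ↔ ∀ i, q i ∈ I S i := Iff.rfl

lemma zero_mem (i : Fin N) : (0 : ℝ) ∈ I S i :=
  ⟨le_refl 0, by exact_mod_cast (S.b_pos i).le⟩

lemma I_ordConn (i : Fin N) : Set.OrdConnected (I S i) := by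
  constructor
  rintro x ⟨hx0, hxb⟩ y ⟨hy0, hyb⟩ z ⟨hz1, hz2⟩
  exact ⟨hx0.trans hz1, le_trans (by exact_mod_cast hz2) hyb⟩

lemma I_convex (i : Fin N) : Convex ℝ (I S i) := (I_ordConn S i).convex

lemma update_feasible {q : Fin N → ℝ} (hq : S.Feasible q) {i : Fin N} {x : ℝ}
    (hx : x ∈ I S i) : S.Feasible (Function.update q i x) := by
  intro j
  rcases eq_or_ne j i with rfl | h
  · simpa [I] using hx
  · simpa [Function.update_of_ne h] using hq j

lemma uIcc_subset_I {i : Fin N} {a c : ℝ} (ha : a ∈ I S i) (hc : c ∈ I S i) :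
    Set.uIcc a c ⊆ I S i := (I_ordConn S i).uIcc_subset ha hc

section slices

lemma diffg1 {e : Fin N × Fin N} (he : e ∈ S.E) (c : ℝ) :
    Differentiable ℝ (fun x => S.g e.1 e.2 x c) :=
  ((S.g_contDiff e he).differentiable one_ne_zero).comp
    (differentiable_id.prodMk (differentiable_const c))

lemma diffg2 {e : Fin N × Fin N} (he : e ∈ S.E) (c : ℝ) :
    Differentiable ℝ (fun y => S.g e.1 e.2 c y) :=
  ((S.g_contDiff e he).differentiable one_ne_zero).comp
    ((differentiable_const c).prodMk differentiable_id)

lemma contg {e : Fin N × Fin N} (he : e ∈ S.E) :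
    Continuous (fun p : ℝ × ℝ => S.g e.1 e.2 p.1 p.2) :=
  (S.g_contDiff e he).continuous

lemma diffgT (i : Fin N) : Differentiable ℝ (S.gT i) :=
  (S.gT_contDiff i).differentiable one_ne_zero

lemma contf (i : Fin N) : Continuous (fun q => S.f q i) := by
  have h1 : Continuous fun q : Fin N → ℝ =>
      ∑ k ∈ Finset.univ.filter fun k => (k, i) ∈ S.E, S.g k i (q k) (q i) := by
    apply continuous_finset_sum
    intro k hk
    have hk' : (k, i) ∈ S.E := by simpa using hk
    have ck : Continuous fun q : Fin N → ℝ => q k := continuous_apply k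
    have ci : Continuous fun q : Fin N → ℝ => q i := continuous_apply i
    have := (contg S hk').comp (ck.prodMk ci)
    exact this
  have h2 : Continuous fun q : Fin N → ℝ =>
      ∑ j ∈ Finset.univ.filter fun j => (i, j) ∈ S.E, S.g i j (q i) (q j) := by
    apply continuous_finset_sum
    intro j hj
    have hj' : (i, j) ∈ S.E := by simpa using hj
    have ci : Continuous fun q : Fin N → ℝ => q i := continuous_apply i
    have cj : Continuous fun q : Fin N → ℝ => q j := continuous_apply j
    have := (contg S hj').comp (ci.prodMk cj)
    exact this
  have h3 : Continuous fun q : Fin N → ℝ => S.gT i (q i) :=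
    ((S.gT_contDiff i).continuous).comp (continuous_apply i)
  exact ((continuous_const.add h1).sub h2).sub h3

end slices

section signs

variable (h3 : ∀ q, S.Feasible q → S.Cond3 q)
include h3

/-- instantiate Cond3 at an arbitrary pair of feasible coordinates -/
lemma dpos {i j : Fin N} (he : (i, j) ∈ S.E) {a c : ℝ} (ha : a ∈ I S i) (hc : c ∈ I S j) :
    0 < deriv (fun x => S.g i j x c) a := by
  have hij : i ≠ j := S.no_self_loops _ he
  set q : Fin N → ℝ := Function.update (Function.update (fun _ => 0) i a) j c with hqdef
  have hq : S.Feasible q :=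
    update_feasible S (update_feasible S (fun k => zero_mem S k) ha) hc
  have h := ((h3 q hq).1 (i, j) he)
  have h1 : q i = a := by simp [hqdef, Function.update_of_ne hij]
  have h2 : q j = c := by simp [hqdef]
  rw [h1, h2] at h
  exact h.1

lemma dneg {i j : Fin N} (he : (i, j) ∈ S.E) {a c : ℝ} (ha : a ∈ I S i) (hc : c ∈ I S j) :
    deriv (fun y => S.g i j a y) c < 0 := by
  have hij : i ≠ j := S.no_self_loops _ he
  set q : Fin N → ℝ := Function.update (Function.update (fun _ => 0) i a) j c with hqdef
  have hq : S.Feasible q :=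
    update_feasible S (update_feasible S (fun k => zero_mem S k) ha) hc
  have h := ((h3 q hq).1 (i, j) he)
  have h1 : q i = a := by simp [hqdef, Function.update_of_ne hij]
  have h2 : q j = c := by simp [hqdef]
  rw [h1, h2] at h
  exact h.2

lemma gTnn {i : Fin N} {a : ℝ} (ha : a ∈ I S i) : 0 ≤ deriv (S.gT i) a := by
  set q : Fin N → ℝ := Function.update (fun _ => 0) i a with hqdef
  have hq : S.Feasible q := update_feasible S (fun k => zero_mem S k) ha
  have h := (h3 q hq).2.1 i
  simpa [hqdef] using h

lemma mono1 {i j : Fin N} (he : (i, j) ∈ S.E) {c : ℝ} (hc : c ∈ I S j) :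
    StrictMonoOn (fun x => S.g i j x c) (I S i) := by
  apply strictMonoOn_of_deriv_pos (I_convex S i) (diffg1 S he c).continuous.continuousOn
  intro x hx
  exact dpos S h3 he (interior_subset hx) hc

lemma anti2 {i j : Fin N} (he : (i, j) ∈ S.E) {a : ℝ} (ha : a ∈ I S i) :
    StrictAntiOn (fun y => S.g i j a y) (I S j) := by
  apply strictAntiOn_of_deriv_neg (I_convex S j) (diffg2 S he a).continuous.continuousOn
  intro x hx
  exact dneg S h3 he ha (interior_subset hx)

end signs

end SCSAux

namespace SCSAux
open SingleCommoditySystem Finset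
variable {N : ℕ} (S : SingleCommoditySystem N)

theorem sum_in (E : Finset (Fin N × Fin N)) (i : Fin N) (F : Fin N → Fin N → ℝ) :
    ∑ k ∈ univ.filter (fun k => (k, i) ∈ E), F k i
      = ∑ e ∈ E.filter (fun e => e.2 = i), F e.1 e.2 := by
  rw [Finset.sum_bij' (i := fun k _ => (k, i)) (j := fun e _ => e.1)]
  · intro a ha; simp_all
  · intro a ha
    simp only [mem_filter, mem_univ, true_and] at ha ⊢
    rw [← ha.2]; exact ha.1
  · intro a ha; simp
  · intro a ha
    simp only [mem_filter] at ha
    rw [← ha.2]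
  · intro a ha; simp_all

theorem sum_out (E : Finset (Fin N × Fin N)) (i : Fin N) (F : Fin N → Fin N → ℝ) :
    ∑ j ∈ univ.filter (fun j => (i, j) ∈ E), F i j
      = ∑ e ∈ E.filter (fun e => e.1 = i), F e.1 e.2 := by
  rw [Finset.sum_bij' (i := fun j _ => (i, j)) (j := fun e _ => e.2)]
  · intro a ha; simp_all
  · intro a ha
    simp only [mem_filter, mem_univ, true_and] at ha ⊢
    rw [← ha.2]; exact ha.1
  · intro a ha; simp
  · intro a ha
    simp only [mem_filter] at ha
    rw [← ha.2]
  · intro a ha; simp_all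

/-- `f` written as sums over edges. -/
lemma f_edges (q : Fin N → ℝ) (i : Fin N) :
    S.f q i = S.lam i + ∑ e ∈ S.E.filter (fun e => e.2 = i), S.g e.1 e.2 (q e.1) (q e.2)
      - ∑ e ∈ S.E.filter (fun e => e.1 = i), S.g e.1 e.2 (q e.1) (q e.2)
      - S.gT i (q i) := by
  unfold SingleCommoditySystem.f
  rw [sum_in S.E i (fun k i => S.g k i (q k) (q i)),
    sum_out S.E i (fun i j => S.g i j (q i) (q j))]

/-- Monotonicity of `f i` in the off-`i` coordinates. -/
lemma f_mono_off (h3 : ∀ q, S.Feasible q → S.Cond3 q) {i : Fin N} {p p' : Fin N → ℝ}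
    (hp : S.Feasible p) (hp' : S.Feasible p') (hple : p ≤ p') (hi : p i = p' i) :
    S.f p i ≤ S.f p' i := by
  unfold SingleCommoditySystem.f
  rw [← hi]
  have hin : ∀ k ∈ univ.filter (fun k => (k, i) ∈ S.E),
      S.g k i (p k) (p i) ≤ S.g k i (p' k) (p i) := by
    intro k hk
    have hk' : (k, i) ∈ S.E := by simpa using hk
    exact (mono1 S h3 hk' (hp i)).monotoneOn (hp k) (hp' k) (hple k)
  have hout : ∀ j ∈ univ.filter (fun j => (i, j) ∈ S.E),
      S.g i j (p i) (p' j) ≤ S.g i j (p i) (p j) := by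
    intro j hj
    have hj' : (i, j) ∈ S.E := by simpa using hj
    exact (anti2 S h3 hj' (hp i)).antitoneOn (hp j) (hp' j) (hple j)
  have h1 := Finset.sum_le_sum hin
  have h2 := Finset.sum_le_sum hout
  linarith

/-- Mean value theorem convenience form. -/
lemma mvt (φ : ℝ → ℝ) (hφ : Differentiable ℝ φ) (a c : ℝ) :
    ∃ ξ ∈ Set.uIcc a c, φ c - φ a = deriv φ ξ * (c - a) := by
  rcases lt_trichotomy a c with h | h | h
  · obtain ⟨ξ, hξ, hd⟩ := exists_deriv_eq_slope φ h hφ.continuous.continuousOn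
      hφ.differentiableOn
    refine ⟨ξ, ?_, ?_⟩
    · exact Set.Icc_subset_uIcc (Set.Ioo_subset_Icc_self hξ)
    · rw [hd, div_mul_cancel₀ _ (sub_ne_zero.mpr h.ne')]
  · exact ⟨a, Set.left_mem_uIcc, by rw [h]; ring⟩
  · obtain ⟨ξ, hξ, hd⟩ := exists_deriv_eq_slope φ h hφ.continuous.continuousOn
      hφ.differentiableOn
    refine ⟨ξ, ?_, ?_⟩
    · exact Set.Icc_subset_uIcc' (Set.Ioo_subset_Icc_self hξ)
    · rw [hd, div_mul_eq_mul_div, eq_div_iff (sub_ne_zero.mpr h.ne')]; ring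
  
/-- A nonempty edge-closed set of vertices is everything. -/
lemma closed_all {P : Set (Fin N)} (hcl : ∀ e ∈ S.E, (e.1 ∈ P ↔ e.2 ∈ P)) {v : Fin N}
    (hv : v ∈ P) (w : Fin N) : w ∈ P := by
  obtain ⟨wk⟩ := (S.connected.1 v w)
  revert hv
  induction wk with
  | nil => exact id
  | cons h p ih =>
      intro hv
      apply ih
      rw [SimpleGraph.fromRel_adj] at h
      rcases h.2 with he | he
      · exact (hcl _ he).1 hv
      · exact (hcl _ he).2 hv
end SCSAux

namespace SCSAux
open SingleCommoditySystem Finset Filter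
variable {N : ℕ} (S : SingleCommoditySystem N)

section exist

variable (h3 : ∀ q, S.Feasible q → S.Cond3 q)
variable (bl bu : Fin N → ℝ) (hle : ∀ i, bl i ≤ bu i)
    (hsub : ∀ i, 0 ≤ bl i ∧ (bu i : EReal) ≤ S.b i)

include hsub in
lemma box_feasible (q : Fin N → ℝ) (hq : q ∈ Set.Icc bl bu) : S.Feasible q := by
  intro i
  refine ⟨(hsub i).1.trans (hq.1 i), le_trans ?_ (hsub i).2⟩
  exact_mod_cast hq.2 i

include h3 hle hsub in
lemma existence
    (hup : ∀ i, ∀ q ∈ Set.Icc bl bu, q i = bu i → S.f q i ≤ 0)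
    (hlo : ∀ i, ∀ q ∈ Set.Icc bl bu, q i = bl i → 0 ≤ S.f q i) :
    ∃ q ∈ Set.Icc bl bu, ∀ i, S.f q i = 0 := by
  haveI : Nonempty (Fin N) := S.connected.nonempty
  have hble : bl ≤ bu := fun i => hle i
  set A : Set (Fin N → ℝ) := {q | q ∈ Set.Icc bl bu ∧ ∀ i, 0 ≤ S.f q i} with hA
  have hblA : bl ∈ A := ⟨⟨le_rfl, hble⟩, fun i => hlo i bl ⟨le_rfl, hble⟩ rfl⟩
  -- A is closed under pairwise sup
  have hsup : ∀ x ∈ A, ∀ y ∈ A, x ⊔ y ∈ A := by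
    intro x hx y hy
    refine ⟨⟨le_sup_of_le_left hx.1.1, sup_le hx.1.2 hy.1.2⟩, ?_⟩
    intro i
    rcases le_total (y i) (x i) with h | h
    · refine le_trans (hx.2 i) (f_mono_off S h3 (box_feasible S bl bu hsub x hx.1)
        (box_feasible S bl bu hsub _ ⟨le_sup_of_le_left hx.1.1, sup_le hx.1.2 hy.1.2⟩)
        le_sup_left ?_)
      simp [Pi.sup_apply, sup_eq_left.mpr h]
    · refine le_trans (hy.2 i) (f_mono_off S h3 (box_feasible S bl bu hsub y hy.1)
        (box_feasible S bl bu hsub _ ⟨le_sup_of_le_left hx.1.1, sup_le hx.1.2 hy.1.2⟩)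
        le_sup_right ?_)
      simp [Pi.sup_apply, sup_eq_right.mpr h]
  -- the candidate equilibrium
  set s : Fin N → ℝ := fun i => sSup ((fun q => q i) '' A) with hs
  have hne : ∀ i, ((fun q : Fin N → ℝ => q i) '' A).Nonempty := fun i => ⟨bl i, bl, hblA, rfl⟩
  have hbdd : ∀ i, BddAbove ((fun q : Fin N → ℝ => q i) '' A) := by
    intro i
    refine ⟨bu i, ?_⟩
    rintro x ⟨q, hq, rfl⟩
    exact hq.1.2 i
  have hqles : ∀ q ∈ A, q ≤ s := fun q hq i => le_csSup (hbdd i) ⟨q, hq, rfl⟩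
  have hsbu : s ≤ bu := fun i => csSup_le (hne i) (by rintro x ⟨q, hq, rfl⟩; exact hq.1.2 i)
  have hbls : bl ≤ s := fun i => le_csSup (hbdd i) ⟨bl, hblA, rfl⟩
  have hsbox : s ∈ Set.Icc bl bu := ⟨hbls, hsbu⟩
  -- s is a limit of elements of A
  have hAclosed : IsClosed A := by
    have h1 : IsClosed (Set.Icc bl bu) := by
      rw [← Set.pi_univ_Icc]
      exact isClosed_set_pi fun i _ => isClosed_Icc
    have h2 : IsClosed {q : Fin N → ℝ | ∀ i, 0 ≤ S.f q i} := by
      have : {q : Fin N → ℝ | ∀ i, 0 ≤ S.f q i} = ⋂ i, (fun q => S.f q i) ⁻¹' Set.Ici 0 := by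
        ext q; simp [Set.mem_iInter]
      rw [this]
      exact isClosed_iInter fun i => isClosed_Ici.preimage (contf S i)
    exact h1.inter h2
  have hsA : s ∈ A := by
    -- approximating sequence
    have hpick : ∀ n : ℕ, ∀ i : Fin N, ∃ p ∈ A, s i - 1 / (n + 1) < p i := by
      intro n i
      have hlt : s i - 1 / (n + 1) < s i := by
        have : (0:ℝ) < 1 / (n + 1) := by positivity
        linarith
      obtain ⟨x, ⟨p, hp, rfl⟩, hx⟩ := exists_lt_of_lt_csSup (hne i) hlt
      exact ⟨p, hp, hx⟩
    choose p hpA hplt using hpick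
    set Q : ℕ → Fin N → ℝ := fun n => Finset.univ.sup' Finset.univ_nonempty (p n) with hQ
    have hQA : ∀ n, Q n ∈ A := fun n =>
      Finset.sup'_mem A hsup Finset.univ Finset.univ_nonempty (p n)
        (fun i _ => hpA n i)
    have hQlow : ∀ n j, s j - 1 / (n + 1) < Q n j := by
      intro n j
      refine lt_of_lt_of_le (hplt n j) ?_
      have := Finset.le_sup' (f := p n) (Finset.mem_univ j)
      calc p n j j ≤ Finset.univ.sup' Finset.univ_nonempty (p n) j := by
            rw [Finset.sup'_apply]
            exact Finset.le_sup' (fun a => p n a j) (Finset.mem_univ j)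
        _ = Q n j := rfl
    have hQtend : Tendsto Q atTop (nhds s) := by
      rw [tendsto_pi_nhds]
      intro j
      apply tendsto_of_tendsto_of_tendsto_of_le_of_le
        (g := fun n : ℕ => s j - 1 / (n + 1)) (h := fun _ : ℕ => s j)
      · have := tendsto_one_div_add_atTop_nhds_zero_nat (𝕜 := ℝ)
        have h' := (tendsto_const_nhds (x := s j) (f := atTop (α := ℕ))).sub this
        simpa using h'
      · exact tendsto_const_nhds
      · exact fun n => (hQlow n j).le
      · exact fun n => hqles (Q n) (hQA n) j
    exact hAclosed.mem_of_tendsto hQtend (Filter.Eventually.of_forall hQA)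
  -- s is an equilibrium
  refine ⟨s, hsbox, ?_⟩
  intro i
  by_contra hne0
  have hpos : 0 < S.f s i := lt_of_le_of_ne (hsA.2 i) (Ne.symm hne0)
  have hsilt : s i < bu i := by
    rcases lt_or_eq_of_le (hsbu i) with h | h
    · exact h
    · exact absurd (hup i s hsbox h) (not_le.mpr hpos)
  -- continuity in the i-th coordinate
  have hcont : Continuous fun x : ℝ => S.f (Function.update s i x) i := by
    apply (contf S i).comp
    apply continuous_pi
    intro j
    rcases eq_or_ne j i with rfl | hji
    · simpa using continuous_id'
    · simp only [Function.update_apply, if_neg hji]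
      exact continuous_const
  have hU : IsOpen ((fun x : ℝ => S.f (Function.update s i x) i) ⁻¹' Set.Ioi 0) :=
    isOpen_Ioi.preimage hcont
  have hmemU : s i ∈ (fun x : ℝ => S.f (Function.update s i x) i) ⁻¹' Set.Ioi 0 := by
    simp only [Set.mem_preimage, Function.update_eq_self, Set.mem_Ioi]
    exact hpos
  obtain ⟨ε, hε, hball⟩ := Metric.isOpen_iff.1 hU _ hmemU
  set x₀ : ℝ := min (bu i) (s i + ε / 2) with hx₀
  have hx₀gt : s i < x₀ := lt_min hsilt (by linarith)
  have hx₀le : x₀ ≤ bu i := min_le_left _ _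
  have hx₀ball : x₀ ∈ Metric.ball (s i) ε := by
    rw [Metric.mem_ball, Real.dist_eq, abs_of_pos (by linarith)]
    have : x₀ ≤ s i + ε / 2 := min_le_right _ _
    linarith
  have hfx₀ : 0 < S.f (Function.update s i x₀) i := hball hx₀ball
  set q' : Fin N → ℝ := Function.update s i x₀ with hq'
  have hq'box : q' ∈ Set.Icc bl bu := by
    constructor <;> intro j <;> rcases eq_or_ne j i with rfl | hji
    · simp only [hq', Function.update_self]
      exact (hbls j).trans hx₀gt.le
    · simp only [hq', Function.update_of_ne hji]; exact hbls j
    · simp only [hq', Function.update_self]; exact hx₀le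
    · simp only [hq', Function.update_of_ne hji]; exact hsbu j
  have hq'A : q' ∈ A := by
    refine ⟨hq'box, fun k => ?_⟩
    rcases eq_or_ne k i with rfl | hki
    · exact hfx₀.le
    · refine le_trans (hsA.2 k) (f_mono_off S h3 (box_feasible S bl bu hsub s hsbox)
        (box_feasible S bl bu hsub q' hq'box) ?_ ?_)
      · intro j
        rcases eq_or_ne j i with rfl | hji
        · simp only [hq', Function.update_self]; exact hx₀gt.le
        · simp [hq', Function.update_of_ne hji]
      · simp [hq', Function.update_of_ne hki]
  have := hqles q' hq'A i
  rw [hq'] at this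
  simp only [Function.update_self] at this
  exact absurd this (not_le.mpr hx₀gt)

end exist
end SCSAux

namespace SCSAux
open SingleCommoditySystem Finset
variable {N : ℕ} (S : SingleCommoditySystem N)

/-- Two feasible equilibria: nowhere is the second strictly larger. -/
lemma no_lt (h3 : ∀ q, S.Feasible q → S.Cond3 q) {q q' : Fin N → ℝ}
    (hq : S.Feasible q) (hq' : S.Feasible q')
    (hfq : ∀ i, S.f q i = 0) (hfq' : ∀ i, S.f q' i = 0) :
    ∀ i, ¬ (q i < q' i) := by
  set d : Fin N → ℝ := fun i => q' i - q i with hd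
  -- MVT decomposition on each edge
  have key : ∀ e : Fin N × Fin N, ∃ ac : ℝ × ℝ, e ∈ S.E →
      (0 < ac.1 ∧ ac.2 < 0 ∧
        S.g e.1 e.2 (q' e.1) (q' e.2) - S.g e.1 e.2 (q e.1) (q e.2)
          = ac.1 * d e.1 + ac.2 * d e.2) := by
    intro e
    by_cases he : e ∈ S.E
    · obtain ⟨ξ, hξ, hξeq⟩ := mvt (fun x => S.g e.1 e.2 x (q' e.2)) (diffg1 S he _)
        (q e.1) (q' e.1)
      obtain ⟨η, hη, hηeq⟩ := mvt (fun y => S.g e.1 e.2 (q e.1) y) (diffg2 S he _)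
        (q e.2) (q' e.2)
      have hξI : ξ ∈ I S e.1 := uIcc_subset_I S (hq e.1) (hq' e.1) hξ
      have hηI : η ∈ I S e.2 := uIcc_subset_I S (hq e.2) (hq' e.2) hη
      refine ⟨(deriv (fun x => S.g e.1 e.2 x (q' e.2)) ξ,
        deriv (fun y => S.g e.1 e.2 (q e.1) y) η), fun _ => ⟨?_, ?_, ?_⟩⟩
      · exact dpos S h3 (show (e.1, e.2) ∈ S.E from he) hξI (hq' e.2)
      · exact dneg S h3 (show (e.1, e.2) ∈ S.E from he) (hq e.1) hηI
      · simp only [hd]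
        linarith [hξeq, hηeq]
    · exact ⟨(1, -1), fun h => absurd h he⟩
  choose ac hac using key
  set w : Fin N × Fin N → ℝ := fun e => (ac e).1 * d e.1 + (ac e).2 * d e.2 with hw
  -- MVT on the departure functions
  have keyT : ∀ u : Fin N, ∃ ξ ∈ Set.uIcc (q u) (q' u),
      S.gT u (q' u) - S.gT u (q u) = deriv (S.gT u) ξ * d u :=
    fun u => mvt (S.gT u) (diffgT S u) (q u) (q' u)
  choose ξT hξT hTeq using keyT
  have hξTI : ∀ u, ξT u ∈ I S u := fun u => uIcc_subset_I S (hq u) (hq' u) (hξT u)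
  set t : Fin N → ℝ := fun u => deriv (S.gT u) (ξT u) with ht
  have htnn : ∀ u, 0 ≤ t u := fun u => gTnn S h3 (hξTI u)
  -- per-vertex balance equation
  have eqn : ∀ i, (∑ e ∈ S.E.filter (fun e => e.2 = i), w e)
      - (∑ e ∈ S.E.filter (fun e => e.1 = i), w e) - t i * d i = 0 := by
    intro i
    have h1 := f_edges S q i
    have h2 := f_edges S q' i
    have hA : ∑ e ∈ S.E.filter (fun e => e.2 = i), S.g e.1 e.2 (q' e.1) (q' e.2)
        = ∑ e ∈ S.E.filter (fun e => e.2 = i),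
          (S.g e.1 e.2 (q e.1) (q e.2) + w e) := by
      refine Finset.sum_congr rfl fun e he => ?_
      have := (hac e (mem_filter.1 he).1).2.2
      simp only [hw]; linarith
    have hB : ∑ e ∈ S.E.filter (fun e => e.1 = i), S.g e.1 e.2 (q' e.1) (q' e.2)
        = ∑ e ∈ S.E.filter (fun e => e.1 = i),
          (S.g e.1 e.2 (q e.1) (q e.2) + w e) := by
      refine Finset.sum_congr rfl fun e he => ?_
      have := (hac e (mem_filter.1 he).1).2.2
      simp only [hw]; linarith
    have hA' : ∑ e ∈ S.E.filter (fun e => e.2 = i),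
        (S.g e.1 e.2 (q e.1) (q e.2) + w e)
        = ∑ e ∈ S.E.filter (fun e => e.2 = i), S.g e.1 e.2 (q e.1) (q e.2)
          + ∑ e ∈ S.E.filter (fun e => e.2 = i), w e := Finset.sum_add_distrib
    have hB' : ∑ e ∈ S.E.filter (fun e => e.1 = i),
        (S.g e.1 e.2 (q e.1) (q e.2) + w e)
        = ∑ e ∈ S.E.filter (fun e => e.1 = i), S.g e.1 e.2 (q e.1) (q e.2)
          + ∑ e ∈ S.E.filter (fun e => e.1 = i), w e := Finset.sum_add_distrib
    have hti : t i = deriv (S.gT i) (ξT i) := rfl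
    have hT := hTeq i
    have hz1 := hfq i
    have hz2 := hfq' i
    rw [h1] at hz1
    rw [h2, hA, hA', hB, hB'] at hz2
    rw [hti]
    have hdi : d i = q' i - q i := rfl
    linarith
  -- sum the balance over the strict-increase set
  intro i₀ hi₀
  set P : Finset (Fin N) := univ.filter (fun i => q i < q' i) with hP
  have hmemP : ∀ i, i ∈ P ↔ q i < q' i := by intro i; simp [hP]
  have hPne : P.Nonempty := ⟨i₀, (hmemP i₀).2 hi₀⟩
  have hsumP : ∑ i ∈ P, ((∑ e ∈ S.E.filter (fun e => e.2 = i), w e)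
      - (∑ e ∈ S.E.filter (fun e => e.1 = i), w e) - t i * d i) = 0 :=
    Finset.sum_eq_zero fun i _ => eqn i
  rw [Finset.sum_sub_distrib, Finset.sum_sub_distrib,
    Finset.sum_fiberwise_eq_sum_filter S.E P Prod.snd w,
    Finset.sum_fiberwise_eq_sum_filter S.E P Prod.fst w,
    Finset.sum_filter, Finset.sum_filter, ← Finset.sum_sub_distrib] at hsumP
  -- sign analysis
  have hWle : ∀ e ∈ S.E,
      ((if e.2 ∈ P then w e else 0) - (if e.1 ∈ P then w e else 0)) ≤ 0 := by
    intro e he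
    have ha := (hac e he).1
    have hc := (hac e he).2.1
    by_cases h1 : e.1 ∈ P <;> by_cases h2 : e.2 ∈ P <;>
      simp only [h1, h2, if_pos, if_neg, if_true, if_false]
    · simp
    · -- e.1 ∈ P, e.2 ∉ P : -(w e) ≤ 0 since w e > 0
      have hd1 : 0 < d e.1 := sub_pos.mpr ((hmemP e.1).1 h1)
      have hd2 : d e.2 ≤ 0 := sub_nonpos.mpr (not_lt.1 (fun h => h2 ((hmemP e.2).2 h)))
      have : 0 < w e := by
        have h3' : 0 < (ac e).1 * d e.1 := mul_pos ha hd1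
        have h4 : 0 ≤ (ac e).2 * d e.2 := (by nlinarith [mul_nonneg (neg_nonneg.2 hc.le) (neg_nonneg.2 hd2)] : (0:ℝ) ≤ (ac e).2 * d e.2)
        simp only [hw]; linarith
      linarith
    · -- e.2 ∈ P, e.1 ∉ P : w e ≤ 0 since w e < 0
      have hd2 : 0 < d e.2 := sub_pos.mpr ((hmemP e.2).1 h2)
      have hd1 : d e.1 ≤ 0 := sub_nonpos.mpr (not_lt.1 (fun h => h1 ((hmemP e.1).2 h)))
      have : w e < 0 := by
        have h3' : (ac e).1 * d e.1 ≤ 0 := mul_nonpos_of_nonneg_of_nonpos ha.le hd1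
        have h4 : (ac e).2 * d e.2 < 0 := mul_neg_of_neg_of_pos hc hd2
        simp only [hw]; linarith
      linarith
    · simp
  have htd : ∀ i ∈ P, 0 ≤ t i * d i := by
    intro i hi
    exact mul_nonneg (htnn i) (sub_nonneg.mpr ((hmemP i).1 hi).le)
  have hsum1 : ∑ e ∈ S.E, ((if e.2 ∈ P then w e else 0) - (if e.1 ∈ P then w e else 0)) ≤ 0 :=
    Finset.sum_nonpos hWle
  have hsum2 : 0 ≤ ∑ i ∈ P, t i * d i := Finset.sum_nonneg htd
  have hW0 : ∀ e ∈ S.E,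
      ((if e.2 ∈ P then w e else 0) - (if e.1 ∈ P then w e else 0)) = 0 := by
    have hz : ∑ e ∈ S.E, ((if e.2 ∈ P then w e else 0) - (if e.1 ∈ P then w e else 0)) = 0 :=
      le_antisymm hsum1 (by linarith)
    exact (Finset.sum_eq_zero_iff_of_nonpos hWle).1 hz
  have htd0 : ∀ i ∈ P, t i * d i = 0 := by
    have hz : ∑ i ∈ P, t i * d i = 0 := le_antisymm (by linarith) hsum2
    exact (Finset.sum_eq_zero_iff_of_nonneg htd).1 hz
  -- the strict-increase set is edge-closed, hence everything
  have hPcl : ∀ e ∈ S.E, (e.1 ∈ {i | q i < q' i} ↔ e.2 ∈ {i | q i < q' i}) := by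
    intro e he
    have hW := hW0 e he
    constructor
    · intro h1
      by_contra h2
      have h1' : e.1 ∈ P := (hmemP e.1).2 h1
      have h2' : e.2 ∉ P := fun h => h2 ((hmemP e.2).1 h)
      rw [if_pos h1', if_neg h2'] at hW
      have ha := (hac e he).1
      have hc := (hac e he).2.1
      have hd1 : 0 < d e.1 := sub_pos.mpr h1
      have hd2 : d e.2 ≤ 0 := sub_nonpos.mpr (not_lt.1 h2)
      have h3' : 0 < (ac e).1 * d e.1 := mul_pos ha hd1
      have h4 : 0 ≤ (ac e).2 * d e.2 := (by nlinarith [mul_nonneg (neg_nonneg.2 hc.le) (neg_nonneg.2 hd2)] : (0:ℝ) ≤ (ac e).2 * d e.2)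
      have : 0 < w e := by simp only [hw]; linarith
      linarith
    · intro h2
      by_contra h1
      have h2' : e.2 ∈ P := (hmemP e.2).2 h2
      have h1' : e.1 ∉ P := fun h => h1 ((hmemP e.1).1 h)
      rw [if_pos h2', if_neg h1'] at hW
      have ha := (hac e he).1
      have hc := (hac e he).2.1
      have hd2 : 0 < d e.2 := sub_pos.mpr h2
      have hd1 : d e.1 ≤ 0 := sub_nonpos.mpr (not_lt.1 h1)
      have h3' : (ac e).1 * d e.1 ≤ 0 := mul_nonpos_of_nonneg_of_nonpos ha.le hd1
      have h4 : (ac e).2 * d e.2 < 0 := mul_neg_of_neg_of_pos hc hd2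
      have : w e < 0 := by simp only [hw]; linarith
      linarith
  have hall : ∀ i, q i < q' i := closed_all S hPcl hi₀
  have hPuniv : P = univ := by
    ext i; simp [hP, hall i]
  -- all departure derivatives vanish along the MVT points: contradiction with Cond3
  have ht0 : ∀ u, t u = 0 := by
    intro u
    have := htd0 u (by rw [hPuniv]; exact mem_univ u)
    have hdu : 0 < d u := sub_pos.mpr (hall u)
    rcases mul_eq_zero.1 this with h | h
    · exact h
    · exact absurd h (ne_of_gt hdu)
  have hfeas : S.Feasible ξT := fun u => hξTI u
  obtain ⟨u, hu⟩ := (h3 ξT hfeas).2.2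
  rw [show deriv (S.gT u) (ξT u) = t u from rfl, ht0 u] at hu
  exact lt_irrefl 0 hu

lemma uniqueness (h3 : ∀ q, S.Feasible q → S.Cond3 q) {q q' : Fin N → ℝ}
    (hq : S.Feasible q) (hq' : S.Feasible q')
    (hfq : ∀ i, S.f q i = 0) (hfq' : ∀ i, S.f q' i = 0) : q' = q := by
  funext i
  exact le_antisymm (not_lt.1 (no_lt S h3 hq hq' hfq hfq' i))
    (not_lt.1 (no_lt S h3 hq' hq hfq' hfq i))

end SCSAux

namespace SCSAux
open SingleCommoditySystem Finset
variable {N : ℕ} (S : SingleCommoditySystem N)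

lemma jac_diag (q : Fin N → ℝ) (i : Fin N) :
    S.jacobian q i i
      = (∑ k ∈ univ.filter (fun k => (k, i) ∈ S.E), deriv (fun y => S.g k i (q k) y) (q i))
        - (∑ j ∈ univ.filter (fun j => (i, j) ∈ S.E), deriv (fun x => S.g i j x (q j)) (q i))
        - deriv (S.gT i) (q i) := by
  have hfun : (fun x => S.f (Function.update q i x) i)
      = fun x => S.lam i + ∑ k ∈ univ.filter (fun k => (k, i) ∈ S.E), S.g k i (q k) x
        - ∑ j ∈ univ.filter (fun j => (i, j) ∈ S.E), S.g i j x (q j)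
        - S.gT i x := by
    funext x
    unfold SingleCommoditySystem.f
    rw [Function.update_self]
    congr 2
    · congr 1
      refine Finset.sum_congr rfl fun k hk => ?_
      have hki : k ≠ i := S.no_self_loops (k, i) (by simpa using hk)
      rw [Function.update_of_ne hki]
    · refine Finset.sum_congr rfl fun j hj => ?_
      have hij : i ≠ j := S.no_self_loops (i, j) (by simpa using hj)
      rw [Function.update_of_ne (Ne.symm hij)]
  show deriv (fun x => S.f (Function.update q i x) i) (q i) = _
  rw [hfun]
  have hd : HasDerivAt (fun x => S.lam i
        + ∑ k ∈ univ.filter (fun k => (k, i) ∈ S.E), S.g k i (q k) x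
        - ∑ j ∈ univ.filter (fun j => (i, j) ∈ S.E), S.g i j x (q j)
        - S.gT i x)
      ((∑ k ∈ univ.filter (fun k => (k, i) ∈ S.E), deriv (fun y => S.g k i (q k) y) (q i))
        - (∑ j ∈ univ.filter (fun j => (i, j) ∈ S.E), deriv (fun x => S.g i j x (q j)) (q i))
        - deriv (S.gT i) (q i)) (q i) := by
    refine HasDerivAt.sub (HasDerivAt.sub ?_ ?_) ?_
    · apply HasDerivAt.const_add
      apply HasDerivAt.fun_sum
      intro k hk
      have hk' : (k, i) ∈ S.E := by simpa using hk
      exact ((diffg2 S hk' (q k)) (q i)).hasDerivAt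
    · apply HasDerivAt.fun_sum
      intro j hj
      have hj' : (i, j) ∈ S.E := by simpa using hj
      exact ((diffg1 S hj' (q j)) (q i)).hasDerivAt
    · exact ((diffgT S i) (q i)).hasDerivAt
  exact hd.deriv

lemma jac_offdiag (q : Fin N → ℝ) {i u : Fin N} (hne : u ≠ i) :
    S.jacobian q i u
      = (if (u, i) ∈ S.E then deriv (fun x => S.g u i x (q i)) (q u) else 0)
        - (if (i, u) ∈ S.E then deriv (fun y => S.g i u (q i) y) (q u) else 0) := by
  have hfun : (fun x => S.f (Function.update q u x) i)
      = fun x => S.f q i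
        + (if (u, i) ∈ S.E then S.g u i x (q i) - S.g u i (q u) (q i) else 0)
        - (if (i, u) ∈ S.E then S.g i u (q i) x - S.g i u (q i) (q u) else 0) := by
    funext x
    unfold SingleCommoditySystem.f
    have hiu : i ≠ u := Ne.symm hne
    rw [Function.update_of_ne hiu]
    have hin : ∑ k ∈ univ.filter (fun k => (k, i) ∈ S.E),
        S.g k i (Function.update q u x k) (q i)
        = (∑ k ∈ univ.filter (fun k => (k, i) ∈ S.E), S.g k i (q k) (q i))
          + (if (u, i) ∈ S.E then S.g u i x (q i) - S.g u i (q u) (q i) else 0) := by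
      have hterm : ∀ k ∈ univ.filter (fun k => (k, i) ∈ S.E),
          S.g k i (Function.update q u x k) (q i)
          = S.g k i (q k) (q i)
            + (if k = u then S.g u i x (q i) - S.g u i (q u) (q i) else 0) := by
        intro k _
        by_cases hku : k = u
        · subst hku
          rw [Function.update_self, if_pos rfl]; ring
        · rw [Function.update_of_ne hku, if_neg hku]; ring
      rw [Finset.sum_congr rfl hterm, Finset.sum_add_distrib, Finset.sum_ite_eq']
      congr 1
      simp
    have hout : ∑ j ∈ univ.filter (fun j => (i, j) ∈ S.E),
        S.g i j (q i) (Function.update q u x j)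
        = (∑ j ∈ univ.filter (fun j => (i, j) ∈ S.E), S.g i j (q i) (q j))
          + (if (i, u) ∈ S.E then S.g i u (q i) x - S.g i u (q i) (q u) else 0) := by
      have hterm : ∀ j ∈ univ.filter (fun j => (i, j) ∈ S.E),
          S.g i j (q i) (Function.update q u x j)
          = S.g i j (q i) (q j)
            + (if j = u then S.g i u (q i) x - S.g i u (q i) (q u) else 0) := by
        intro j _
        by_cases hju : j = u
        · subst hju
          rw [Function.update_self, if_pos rfl]; ring
        · rw [Function.update_of_ne hju, if_neg hju]; ring
      rw [Finset.sum_congr rfl hterm, Finset.sum_add_distrib, Finset.sum_ite_eq']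
      congr 1
      simp
    rw [hin, hout]
    ring
  show deriv (fun x => S.f (Function.update q u x) i) (q u) = _
  rw [hfun]
  have hd : HasDerivAt (fun x => S.f q i
        + (if (u, i) ∈ S.E then S.g u i x (q i) - S.g u i (q u) (q i) else 0)
        - (if (i, u) ∈ S.E then S.g i u (q i) x - S.g i u (q i) (q u) else 0))
      ((if (u, i) ∈ S.E then deriv (fun x => S.g u i x (q i)) (q u) else 0)
        - (if (i, u) ∈ S.E then deriv (fun y => S.g i u (q i) y) (q u) else 0)) (q u) := by
    refine HasDerivAt.sub ?_ ?_
    · apply HasDerivAt.const_add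
      by_cases h1 : (u, i) ∈ S.E
      · simp only [if_pos h1]
        exact (((diffg1 S h1 (q i)) (q u)).hasDerivAt).sub_const _
      · simp only [if_neg h1]
        exact hasDerivAt_const _ _
    · by_cases h2 : (i, u) ∈ S.E
      · simp only [if_pos h2]
        exact (((diffg2 S h2 (q i)) (q u)).hasDerivAt).sub_const _
      · simp only [if_neg h2]
        exact hasDerivAt_const _ _
  exact hd.deriv

lemma jac_colsum (q : Fin N → ℝ) (u : Fin N) :
    ∑ i, S.jacobian q i u = - deriv (S.gT u) (q u) := by
  rw [← Finset.add_sum_erase _ _ (Finset.mem_univ u)]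
  have herase : ∑ i ∈ univ.erase u, S.jacobian q i u
      = (∑ i ∈ univ.erase u, if (u, i) ∈ S.E then deriv (fun x => S.g u i x (q i)) (q u) else 0)
        - (∑ i ∈ univ.erase u,
            if (i, u) ∈ S.E then deriv (fun y => S.g i u (q i) y) (q u) else 0) := by
    rw [← Finset.sum_sub_distrib]
    refine Finset.sum_congr rfl fun i hi => ?_
    exact jac_offdiag S q (Ne.symm (Finset.ne_of_mem_erase hi))
  rw [herase, jac_diag]
  have hnsl : ((u, u) ∈ S.E) = False := by
    simp only [eq_iff_iff, iff_false]
    intro h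
    exact S.no_self_loops (u, u) h rfl
  have h1 : ∑ i ∈ univ.erase u,
      (if (u, i) ∈ S.E then deriv (fun x => S.g u i x (q i)) (q u) else 0)
      = ∑ j ∈ univ.filter (fun j => (u, j) ∈ S.E), deriv (fun x => S.g u j x (q j)) (q u) := by
    rw [Finset.sum_erase _ (by simp [hnsl]), ← Finset.sum_filter]
  have h2 : ∑ i ∈ univ.erase u,
      (if (i, u) ∈ S.E then deriv (fun y => S.g i u (q i) y) (q u) else 0)
      = ∑ k ∈ univ.filter (fun k => (k, u) ∈ S.E), deriv (fun y => S.g k u (q k) y) (q u) := by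
    rw [Finset.sum_erase _ (by simp [hnsl]), ← Finset.sum_filter]
  rw [h1, h2]
  ring

end SCSAux

namespace SCSAux
open SingleCommoditySystem Finset
variable {N : ℕ} (S : SingleCommoditySystem N)

section spectral

variable (h3 : ∀ q, S.Feasible q → S.Cond3 q) {q : Fin N → ℝ} (hq : S.Feasible q)
include h3 hq

lemma jac_offdiag_nonneg {i u : Fin N} (hne : u ≠ i) : 0 ≤ S.jacobian q i u := by
  rw [jac_offdiag S q hne]
  have h1 : (0:ℝ) ≤ if (u, i) ∈ S.E then deriv (fun x => S.g u i x (q i)) (q u) else 0 := by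
    split_ifs with h
    · exact (dpos S h3 h (hq u) (hq i)).le
    · exact le_rfl
  have h2 : (if (i, u) ∈ S.E then deriv (fun y => S.g i u (q i) y) (q u) else 0) ≤ 0 := by
    split_ifs with h
    · exact (dneg S h3 h (hq i) (hq u)).le
    · exact le_rfl
  linarith

lemma jac_adj_pos {i u : Fin N} (he : (u, i) ∈ S.E ∨ (i, u) ∈ S.E) :
    0 < S.jacobian q i u := by
  have hne : u ≠ i := by
    rcases he with h | h
    · exact S.no_self_loops (u, i) h
    · exact Ne.symm (S.no_self_loops (i, u) h)
  rw [jac_offdiag S q hne]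
  rcases he with h | h
  · have h2 : (i, u) ∉ S.E := S.antisymm u i h
    rw [if_pos h, if_neg h2, sub_zero]
    exact dpos S h3 h (hq u) (hq i)
  · have h2 : (u, i) ∉ S.E := S.antisymm i u h
    rw [if_neg h2, if_pos h, zero_sub, neg_pos]
    exact dneg S h3 h (hq i) (hq u)

/-- The Jacobian at a feasible point is nonsingular. -/
lemma jac_det_ne : (S.jacobian q).det ≠ 0 := by
  haveI : Nonempty (Fin N) := S.connected.nonempty
  intro h0
  set A := S.jacobian q with hA
  have h0t : A.transpose.det = 0 := by rw [Matrix.det_transpose]; exact h0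
  obtain ⟨w, hwne, hmv⟩ := Matrix.exists_mulVec_eq_zero_iff.mpr h0t
  have hW : ∀ u, ∑ x, A x u * w x = 0 := by
    intro u
    have := congrFun hmv u
    simpa [Matrix.mulVec, dotProduct, Matrix.transpose_apply] using this
  obtain ⟨u, -, hmaxu⟩ := Finset.exists_max_image univ (fun x => |w x|) univ_nonempty
  set ww : Fin N → ℝ := if 0 ≤ w u then w else fun x => -(w x) with hww
  have hW' : ∀ u', ∑ x, A x u' * ww x = 0 := by
    intro u'
    rw [hww]
    split_ifs with h
    · exact hW u'
    · have : ∑ x, A x u' * -(w x) = -∑ x, A x u' * w x := by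
        rw [← Finset.sum_neg_distrib]
        exact Finset.sum_congr rfl fun x _ => by ring
      rw [this, hW u', neg_zero]
  have hwwu : ww u = |w u| := by
    rw [hww]
    split_ifs with h
    · exact (abs_of_nonneg h).symm
    · simp only [abs_of_neg (not_le.1 h)]
  have hmax : ∀ x, ww x ≤ ww u := by
    intro x
    have h1 : ww x ≤ |w x| := by
      rw [hww]; split_ifs <;> simp [le_abs_self, neg_le_abs, abs_neg]
    exact h1.trans ((hmaxu x (mem_univ x)).trans_eq hwwu.symm)
  have hwwupos : 0 < ww u := by
    rw [hwwu]
    obtain ⟨x, hx⟩ := Function.ne_iff.1 hwne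
    calc (0:ℝ) < |w x| := abs_pos.mpr hx
      _ ≤ |w u| := hmaxu x (mem_univ x)
  -- key claim at any maximizing vertex
  have claim : ∀ u', ww u' = ww u →
      (∀ x, 0 < A x u' → ww x = ww u) ∧ deriv (S.gT u') (q u') = 0 := by
    intro u' hu'
    have hsplit : ∑ x, A x u' * ww x
        = (∑ x, A x u' * (ww x - ww u)) + (∑ x, A x u') * ww u := by
      rw [Finset.sum_mul, ← Finset.sum_add_distrib]
      exact Finset.sum_congr rfl fun x _ => by ring
    have hterm : ∀ x ∈ univ, A x u' * (ww x - ww u) ≤ 0 := by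
      intro x _
      rcases eq_or_ne x u' with rfl | hxu
      · rw [hu', sub_self, mul_zero]
      · exact mul_nonpos_of_nonneg_of_nonpos
          (jac_offdiag_nonneg S h3 hq (Ne.symm hxu)) (by linarith [hmax x])
    have hS1 : ∑ x, A x u' * (ww x - ww u) ≤ 0 := Finset.sum_nonpos hterm
    have hS2 : (∑ x, A x u') * ww u ≤ 0 := by
      rw [jac_colsum]
      exact mul_nonpos_of_nonpos_of_nonneg (by linarith [gTnn S h3 (hq u')]) hwwupos.le
    have h0' := hW' u'
    rw [hsplit] at h0'
    have hS1z : ∑ x, A x u' * (ww x - ww u) = 0 := le_antisymm hS1 (by linarith)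
    have hS2z : (∑ x, A x u') * ww u = 0 := by linarith
    constructor
    · intro x hx
      have := (Finset.sum_eq_zero_iff_of_nonpos hterm).1 hS1z x (mem_univ x)
      rcases mul_eq_zero.1 this with h | h
      · exact absurd h (ne_of_gt hx)
      · linarith [sub_eq_zero.1 h]
    · have : (∑ x, A x u') = 0 := by
        rcases mul_eq_zero.1 hS2z with h | h
        · exact h
        · exact absurd h (ne_of_gt hwwupos)
      rw [jac_colsum] at this
      linarith
  -- the set of maximizers is edge-closed
  have hPcl : ∀ e ∈ S.E, (e.1 ∈ {x | ww x = ww u} ↔ e.2 ∈ {x | ww x = ww u}) := by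
    intro e he
    constructor
    · intro h1
      exact (claim e.1 h1).1 e.2 (jac_adj_pos S h3 hq (Or.inl he))
    · intro h2
      exact (claim e.2 h2).1 e.1 (jac_adj_pos S h3 hq (Or.inr he))
  have hall : ∀ x, ww x = ww u := closed_all S hPcl (show u ∈ {x | ww x = ww u} from rfl)
  have hT0 : ∀ x, deriv (S.gT x) (q x) = 0 := fun x => (claim x (hall x)).2
  obtain ⟨i, hi⟩ := (h3 q hq).2.2
  rw [hT0 i] at hi
  exact lt_irrefl 0 hi

end spectral
end SCSAux

namespace SCSAux
open SingleCommoditySystem Finset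
variable {N : ℕ} (S : SingleCommoditySystem N)

lemma eigen (h3 : ∀ q, S.Feasible q → S.Cond3 q) {q : Fin N → ℝ} (hq : S.Feasible q)
    (z : ℂ) (hz : ((S.jacobian q).map (fun x : ℝ => (x : ℂ))).charpoly.IsRoot z) :
    z.re < 0 := by
  haveI : Nonempty (Fin N) := S.connected.nonempty
  by_contra hlt
  push_neg at hlt
  set A := S.jacobian q with hA
  set Mc := A.map (fun x : ℝ => (x : ℂ)) with hMc
  have hdet : (Matrix.scalar (Fin N) z - Mc).det = 0 := by
    have h1 := eval_det (Matrix.charmatrix Mc) z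
    rw [Matrix.matPolyEquiv_charmatrix] at h1
    simp only [Polynomial.eval_sub, Polynomial.eval_X, Polynomial.eval_C] at h1
    rw [← h1]
    exact hz
  have hdetT : ((Matrix.scalar (Fin N) z - Mc).transpose).det = 0 := by
    rw [Matrix.det_transpose]; exact hdet
  obtain ⟨v, hvne, hmv⟩ := Matrix.exists_mulVec_eq_zero_iff.mpr hdetT
  have hEq : ∀ u, ∑ x, (A x u : ℂ) * v x = z * v u := by
    intro u
    have h := congrFun hmv u
    simp only [hMc, Matrix.mulVec, dotProduct, Matrix.transpose_apply, Matrix.sub_apply,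
      Matrix.scalar_apply, Matrix.diagonal_apply, Matrix.map_apply, sub_mul, ite_mul, zero_mul,
      Finset.sum_sub_distrib, Finset.sum_ite_eq', Finset.mem_univ, if_true,
      Pi.zero_apply] at h
    exact (sub_eq_zero.1 h).symm
  obtain ⟨u, -, hmaxu⟩ := Finset.exists_max_image univ (fun x => ‖v x‖)
    univ_nonempty
  have hvu : 0 < ‖v u‖ := by
    obtain ⟨x, hx⟩ := Function.ne_iff.1 hvne
    calc (0:ℝ) < ‖v x‖ := by simpa using hx
      _ ≤ ‖v u‖ := hmaxu x (mem_univ x)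
  set α : ℝ := A u u with hα
  have hsplit : (z - (α : ℂ)) * v u = ∑ x ∈ univ.erase u, (A x u : ℂ) * v x := by
    have h1 := hEq u
    rw [← Finset.add_sum_erase _ _ (Finset.mem_univ u)] at h1
    rw [sub_mul]
    rw [← h1, hα]
    ring
  have hoffnn : ∀ x ∈ univ.erase u, 0 ≤ A x u := by
    intro x hx
    exact jac_offdiag_nonneg S h3 hq (Ne.symm (Finset.ne_of_mem_erase hx))
  have main : ‖z - (α : ℂ)‖ * ‖v u‖
      ≤ (∑ x ∈ univ.erase u, A x u) * ‖v u‖ := by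
    calc ‖z - (α : ℂ)‖ * ‖v u‖
        = ‖(z - (α : ℂ)) * v u‖ := (norm_mul _ _).symm
      _ = ‖∑ x ∈ univ.erase u, (A x u : ℂ) * v x‖ := by rw [hsplit]
      _ ≤ ∑ x ∈ univ.erase u, ‖(A x u : ℂ) * v x‖ :=
          norm_sum_le _ _
      _ = ∑ x ∈ univ.erase u, A x u * ‖v x‖ := by
          refine Finset.sum_congr rfl fun x hx => ?_
          rw [norm_mul, Complex.norm_real, Real.norm_eq_abs, abs_of_nonneg (hoffnn x hx)]
      _ ≤ ∑ x ∈ univ.erase u, A x u * ‖v u‖ := by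
          refine Finset.sum_le_sum fun x hx => ?_
          exact mul_le_mul_of_nonneg_left (hmaxu x (mem_univ x)) (hoffnn x hx)
      _ = (∑ x ∈ univ.erase u, A x u) * ‖v u‖ := by rw [Finset.sum_mul]
  have hcol : ∑ x ∈ univ.erase u, A x u = - deriv (S.gT u) (q u) - α := by
    have h1 := jac_colsum S q u
    rw [← Finset.add_sum_erase _ _ (Finset.mem_univ u)] at h1
    rw [hα]
    linarith
  have hgT : 0 ≤ deriv (S.gT u) (q u) := gTnn S h3 (hq u)
  have hαle : α ≤ 0 := by
    have h2 : 0 ≤ ∑ x ∈ univ.erase u, A x u := Finset.sum_nonneg hoffnn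
    linarith [hcol]
  have habs : ‖z - (α : ℂ)‖ ≤ -α := by
    have h1 : ‖z - (α : ℂ)‖ * ‖v u‖ ≤ (-α) * ‖v u‖ := by
      refine main.trans ?_
      exact mul_le_mul_of_nonneg_right (by linarith [hcol]) (norm_nonneg _)
    exact le_of_mul_le_mul_right h1 hvu
  have hsq : (z.re - α) ^ 2 + z.im ^ 2 ≤ α ^ 2 := by
    have h1 : ‖z - (α : ℂ)‖ ^ 2 ≤ (-α) ^ 2 := by
      nlinarith [norm_nonneg (z - (α : ℂ))]
    rw [Complex.sq_norm, Complex.normSq_apply, Complex.sub_re, Complex.sub_im,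
      Complex.ofReal_re, Complex.ofReal_im] at h1
    nlinarith [h1]
  have hre0 : z.re = 0 := by nlinarith
  have him0 : z.im = 0 := by nlinarith
  have hz0 : z = 0 := Complex.ext hre0 him0
  rw [hz0] at hdet
  have hdetMc : Mc.det = 0 := by
    rw [map_zero, zero_sub, Matrix.det_neg] at hdet
    rcases mul_eq_zero.1 hdet with h | h
    · exact absurd h (by simp)
    · exact h
  have hdetA : A.det = 0 := by
    have h1 := RingHom.map_det Complex.ofRealHom A
    have h2 : (Complex.ofRealHom.mapMatrix A) = Mc := rfl
    rw [h2, hdetMc] at h1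
    have h3' : (A.det : ℂ) = 0 := h1
    exact_mod_cast h3'
  exact jac_det_ne S h3 hq hdetA

end SCSAux

/-- **Theorem 3.** Suppose Condition (3) holds at every feasible point, and
there are finite reals `bl i ≤ bu i` with `[bl i, bu i] ⊆ [0, b i]` such that
on the box `B̄ = Π_i [bl i, bu i]` one has `f i (q) ≤ 0` whenever `q i = bu i`
and `f i (q) ≥ 0` whenever `q i = bl i`.  Then the system has exactly one
equilibrium point in `Q`; it lies in `B̄`, and every eigenvalue of the
Jacobian there has strictly negative real part. -/
theorem stmt2 {N : ℕ} (S : SingleCommoditySystem N)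
    (h3 : ∀ q, S.Feasible q → S.Cond3 q)
    (bl bu : Fin N → ℝ) (hle : ∀ i, bl i ≤ bu i)
    (hsub : ∀ i, 0 ≤ bl i ∧ (bu i : EReal) ≤ S.b i)
    (hup : ∀ i, ∀ q ∈ Set.Icc bl bu, q i = bu i → S.f q i ≤ 0)
    (hlo : ∀ i, ∀ q ∈ Set.Icc bl bu, q i = bl i → 0 ≤ S.f q i) :
    ∃ q ∈ Set.Icc bl bu, (∀ i, S.f q i = 0) ∧
      (∀ q', S.Feasible q' → (∀ i, S.f q' i = 0) → q' = q) ∧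
      (∀ z : ℂ, ((S.jacobian q).map (fun x : ℝ => (x : ℂ))).charpoly.IsRoot z →
        z.re < 0) := by

  obtain ⟨q, hqbox, hfq⟩ := SCSAux.existence S h3 bl bu hle hsub hup hlo
  have hqfeas := SCSAux.box_feasible S bl bu hsub q hqbox
  refine ⟨q, hqbox, hfq, ?_, ?_⟩
  · intro q' hq' hfq'
    exact SCSAux.uniqueness S h3 hqfeas hq' hfq hfq'
  · intro z hz
    exact SCSAux.eigen S h3 hqfeas z hz
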